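/- Under assumptions (A3), (A5), (A6), the single-step error bound holds: P[N(F) ⊄ F | A] ≤ α, where A = {Ŝ^(b) ⊇ S_0 for all b = 1,...,B} is the event that screening succeeds in every split, F is the set of false hypotheses, and N is the successor map of the aggregated sequential procedure. -/

import Mathlib

open MeasureTheory ProbabilityTheory Finset

attribute [local instance] Classical.propDecidable

/-- Finset-sum version of `le_lintegral_add`. -/
lemma sum_lintegral_le_lintegral_sum {Ω : Type*} [MeasurableSpace Ω] (ν : Measure Ω)
    {ι : Type*} (s : Finset ι) (f : ι → Ω → ENNReal) :
    ∑ i ∈ s, ∫⁻ ω, f i ω ∂ν ≤ ∫⁻ ω, ∑ i ∈ s, f i ω ∂ν := by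
  classical
  induction s using Finset.induction_on with
  | empty => simp
  | insert a s hx ih =>
    rw [Finset.sum_insert hx]
    calc ∫⁻ ω, f a ω ∂ν + ∑ i ∈ s, ∫⁻ ω, f i ω ∂ν
        ≤ ∫⁻ ω, f a ω ∂ν + ∫⁻ ω, ∑ i ∈ s, f i ω ∂ν := add_le_add le_rfl ih
      _ ≤ ∫⁻ ω, (f a ω + ∑ i ∈ s, f i ω) ∂ν := le_lintegral_add _ _
      _ = ∫⁻ ω, ∑ i ∈ insert a s, f i ω ∂ν := by
          simp [Finset.sum_insert hx]

/-- the single-step error bound `P[N(F) ⊄ F | A] ≤ α` for the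
aggregated multi sample-splitting procedure, under the correct testing property (A3)
(superuniform p-values for true nulls, on the screening event `A`), the single-step
property (A5) of the multiplicity adjustments, and the aggregation property (A6). -/
theorem stmt16 {Ω : Type*} [MeasurableSpace Ω] (μ : Measure Ω) [IsProbabilityMeasure μ]
    (p B : ℕ) (hB : 0 < B)
    (Cfam : Finset (Finset (Fin p)))
    (S0 : Finset (Fin p))
    (Shat : Fin B → Ω → Finset (Fin p))
    (pv : Finset (Fin p) → Fin B → Ω → ℝ)
    (m : Finset (Fin p) → Fin B → Set (Finset (Fin p)) → Ω → ℝ)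
    (aggr : (Fin B → ℝ) → ℝ)
    (α : ℝ) (hα : α ∈ Set.Ioo (0:ℝ) 1)
    (A : Set Ω) (hA : A = {ω | ∀ b, S0 ⊆ Shat b ω})
    (F : Set (Finset (Fin p))) (hF : F = {C | C ∈ Cfam ∧ (C ∩ S0).Nonempty})
    (hm1 : ∀ C b R ω, 1 ≤ m C b R ω)
    -- (A5) single-step property, for every split and rejected collection
    (hA5 : ∀ ω b (R : Set (Finset (Fin p))),
      ∑ C ∈ Cfam, (if C ∉ R ∧ (C ∩ Shat b ω).Nonempty then 1 / m C b R ω else 0) ≤ 1)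
    -- (A3) correct testing: on the screening event, p-values of true nulls are superuniform
    (hA3 : ∀ C ∈ Cfam, C ∩ S0 = ∅ → ∀ b, ∀ u ∈ Set.Icc (0:ℝ) 1,
      μ[|A] {ω | pv C b ω ≤ u} ≤ ENNReal.ofReal u)
    -- (A6) aggregation property
    (hA6 : ∀ C ∈ Cfam, ∀ R : Set (Finset (Fin p)),
      (∀ b, ∀ u ∈ Set.Icc (0:ℝ) 1, μ[|A] {ω | pv C b ω ≤ u} ≤ ENNReal.ofReal u) →
      ∀ u ∈ Set.Icc (0:ℝ) 1,
        μ[|A] {ω | aggr (fun b => pv C b ω * m C b R ω) ≤ u}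
          ≤ ENNReal.ofReal (u / B) *
              ∑ b, ∫⁻ ω, ENNReal.ofReal
                (if (C ∩ Shat b ω).Nonempty then 1 / m C b R ω else 0) ∂(μ[|A])) :
    μ[|A] {ω | ¬ ({C | C ∈ Cfam ∧ C ∉ F ∧ aggr (fun b => pv C b ω * m C b F ω) ≤ α} ⊆ F)}
      ≤ ENNReal.ofReal α := by
  classical
  set ν := μ[|A] with hν
  -- the conditional measure is subprobability
  have hν1 : ν Set.univ ≤ 1 := by
    rw [hν, ProbabilityTheory.cond, Measure.smul_apply, smul_eq_mul,
      Measure.restrict_apply_univ]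
    rcases eq_or_ne (μ A) 0 with h | h
    · simp [h]
    · rw [ENNReal.inv_mul_cancel h (measure_ne_top μ A)]
  -- union bound setup
  set T : Finset (Finset (Fin p)) := Cfam.filter (fun C => C ∉ F) with hT
  have hsub : {ω | ¬ ({C | C ∈ Cfam ∧ C ∉ F ∧ aggr (fun b => pv C b ω * m C b F ω) ≤ α} ⊆ F)}
      ⊆ ⋃ C ∈ T, {ω | aggr (fun b => pv C b ω * m C b F ω) ≤ α} := by
    intro ω hω
    simp only [Set.mem_setOf_eq, Set.not_subset] at hω
    obtain ⟨C, ⟨h1, h2, h3⟩, -⟩ := hω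
    exact Set.mem_iUnion₂.2 ⟨C, Finset.mem_filter.2 ⟨h1, h2⟩, h3⟩
  -- per-hypothesis bound via (A3) and (A6)
  have key : ∀ C ∈ T,
      ν {ω | aggr (fun b => pv C b ω * m C b F ω) ≤ α}
        ≤ ENNReal.ofReal (α / B) * ∑ b, ∫⁻ ω, ENNReal.ofReal
            (if (C ∩ Shat b ω).Nonempty then 1 / m C b F ω else 0) ∂ν := by
    intro C hC
    rw [hT, Finset.mem_filter] at hC
    have hCS0 : C ∩ S0 = ∅ := by
      by_contra h
      exact hC.2 (hF ▸ Set.mem_setOf_eq ▸ ⟨hC.1, Finset.nonempty_iff_ne_empty.2 h⟩)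
    exact hA6 C hC.1 F (fun b u hu => hA3 C hC.1 hCS0 b u hu) α ⟨hα.1.le, hα.2.le⟩
  -- pointwise bound via (A5)
  have hpt : ∀ b : Fin B, ∀ ω,
      ∑ C ∈ T, ENNReal.ofReal (if (C ∩ Shat b ω).Nonempty then 1 / m C b F ω else 0) ≤ 1 := by
    intro b ω
    have hnn : ∀ C ∈ T, (0:ℝ) ≤ if (C ∩ Shat b ω).Nonempty then 1 / m C b F ω else 0 := by
      intro C _
      split
      · exact div_nonneg zero_le_one (le_trans zero_le_one (hm1 C b F ω))
      · exact le_rfl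
    rw [← ENNReal.ofReal_sum_of_nonneg hnn]
    have hle : ∑ C ∈ T, (if (C ∩ Shat b ω).Nonempty then 1 / m C b F ω else 0) ≤ 1 := by
      have := hA5 ω b F
      rw [hT, Finset.sum_filter]
      refine le_trans (le_of_eq (Finset.sum_congr rfl fun C _ => ?_)) this
      by_cases h1 : C ∉ F <;> by_cases h2 : (C ∩ Shat b ω).Nonempty <;>
        simp [h1, h2]
    calc ENNReal.ofReal (∑ C ∈ T, (if (C ∩ Shat b ω).Nonempty then 1 / m C b F ω else 0))
        ≤ ENNReal.ofReal 1 := ENNReal.ofReal_le_ofReal hle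
      _ = 1 := ENNReal.ofReal_one
  -- each integral sum is at most 1
  have hint : ∀ b : Fin B,
      ∑ C ∈ T, ∫⁻ ω, ENNReal.ofReal
          (if (C ∩ Shat b ω).Nonempty then 1 / m C b F ω else 0) ∂ν ≤ 1 := by
    intro b
    calc ∑ C ∈ T, ∫⁻ ω, ENNReal.ofReal
            (if (C ∩ Shat b ω).Nonempty then 1 / m C b F ω else 0) ∂ν
        ≤ ∫⁻ ω, ∑ C ∈ T, ENNReal.ofReal
            (if (C ∩ Shat b ω).Nonempty then 1 / m C b F ω else 0) ∂ν :=
          sum_lintegral_le_lintegral_sum ν T _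
      _ ≤ ∫⁻ _, 1 ∂ν := lintegral_mono fun ω => hpt _ ω
      _ = ν Set.univ := lintegral_one
      _ ≤ 1 := hν1
  calc ν {ω | ¬ ({C | C ∈ Cfam ∧ C ∉ F ∧ aggr (fun b => pv C b ω * m C b F ω) ≤ α} ⊆ F)}
      ≤ ν (⋃ C ∈ T, {ω | aggr (fun b => pv C b ω * m C b F ω) ≤ α}) := measure_mono hsub
    _ ≤ ∑ C ∈ T, ν {ω | aggr (fun b => pv C b ω * m C b F ω) ≤ α} :=
        measure_biUnion_finset_le T _
    _ ≤ ∑ C ∈ T, ENNReal.ofReal (α / B) * ∑ b, ∫⁻ ω, ENNReal.ofReal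
          (if (C ∩ Shat b ω).Nonempty then 1 / m C b F ω else 0) ∂ν :=
        Finset.sum_le_sum key
    _ = ENNReal.ofReal (α / B) * ∑ b, ∑ C ∈ T, ∫⁻ ω, ENNReal.ofReal
          (if (C ∩ Shat b ω).Nonempty then 1 / m C b F ω else 0) ∂ν := by
        rw [← Finset.mul_sum, Finset.sum_comm]
    _ ≤ ENNReal.ofReal (α / B) * ∑ _b : Fin B, (1:ENNReal) :=
        mul_le_mul_of_nonneg_left (Finset.sum_le_sum fun b _ => hint b) zero_le
    _ = ENNReal.ofReal (α / B) * B := by simp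
    _ = ENNReal.ofReal α := by
        rw [← ENNReal.ofReal_natCast B, ← ENNReal.ofReal_mul (div_nonneg hα.1.le (Nat.cast_nonneg B))]
        congr 1
        field_simp
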